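/- Let m ≥ 2 be an even natural number. For each integer 0 ≤ j ≤ m/2 - 1, the expression A(j) = (-1)^j · [C(m-1, 2j) + ∑_{k=0}^{j-1} (C(m-1, 2k)·C(m-1, 2j-2k) − C(m-1, 2k+1)·C(m-1, 2j-2k-1))] equals C(m-1, j). -/

import Mathlib

open Polynomial Finset

lemma coeff_one_sub_X_pow (n i : ℕ) :
    ((1 - X : ℤ[X]) ^ n).coeff i = (-1) ^ i * (n.choose i : ℤ) := by
  have h : (1 - X : ℤ[X]) = -(X + C (-1)) := by simp [sub_eq_neg_add]; ring
  have h2 : ((-1 : ℤ[X])) ^ n = C ((-1) ^ n) := by simp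
  rw [h, neg_pow, h2, Polynomial.coeff_C_mul, Polynomial.coeff_X_add_C_pow]
  rcases le_or_gt i n with hin | hin
  · have hn : n + (n - i) = 2 * (n - i) + i := by omega
    rw [← mul_assoc, ← pow_add, hn, pow_add, pow_mul]
    simp
  · simp [Nat.choose_eq_zero_of_lt hin]

lemma coeff_one_sub_X_sq_pow (n j : ℕ) :
    ((1 - X ^ 2 : ℤ[X]) ^ n).coeff (2 * j) = (-1) ^ j * (n.choose j : ℤ) := by
  have h : (1 - X ^ 2 : ℤ[X]) = -X ^ 2 + 1 := by ring
  rw [h, add_pow]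
  rw [Polynomial.finset_sum_coeff]
  have hterm : ∀ k, ((-X ^ 2 : ℤ[X]) ^ k * 1 ^ (n - k) * (n.choose k : ℤ[X])).coeff (2 * j)
      = if 2 * k = 2 * j then (-1) ^ k * (n.choose k : ℤ) else 0 := by
    intro k
    have : ((-X ^ 2 : ℤ[X]) ^ k * 1 ^ (n - k) * (n.choose k : ℤ[X]))
        = C ((-1) ^ k * (n.choose k : ℤ)) * X ^ (2 * k) := by
      rw [neg_pow, one_pow, mul_one, ← pow_mul,
        Polynomial.C_mul, Polynomial.C_pow, Polynomial.C_neg, Polynomial.C_1,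
        Polynomial.C_eq_natCast]
      ring
    rw [this, Polynomial.coeff_C_mul, Polynomial.coeff_X_pow]
    split_ifs with h1 h2 h3 <;> first | (exfalso; omega) | ring
  rw [Finset.sum_congr rfl fun k _ => hterm k, Finset.sum_eq_single j]
  · simp
  · intro k _ hk
    rw [if_neg (by omega)]
  · intro hj'
    rw [if_pos rfl]
    simp only [Finset.mem_range, not_lt] at hj'
    simp [Nat.choose_eq_zero_of_lt (by omega : n < j)]

theorem stmt_7 (m : ℕ) (hm : 2 ≤ m) (hme : Even m) (j : ℕ) (hj : j ≤ m / 2 - 1) :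
    (-1 : ℤ) ^ j *
      (((m - 1).choose (2 * j) : ℤ) +
        ∑ k ∈ Finset.range j,
          (((m - 1).choose (2 * k) : ℤ) * ((m - 1).choose (2 * j - 2 * k)) -
            ((m - 1).choose (2 * k + 1) : ℤ) * ((m - 1).choose (2 * j - 2 * k - 1)))) =
    ((m - 1).choose j : ℤ) := by
  set n := m - 1 with hn
  have key : ∑ i ∈ Finset.range (2 * j + 1),
      (-1 : ℤ) ^ i * (n.choose i : ℤ) * (n.choose (2 * j - i) : ℤ)
      = (-1) ^ j * (n.choose j : ℤ) := by
    have h := coeff_one_sub_X_sq_pow n j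
    have hfac : (1 - X ^ 2 : ℤ[X]) = (1 + X) * (1 - X) := by ring
    rw [hfac, mul_pow, Polynomial.coeff_mul,
      Finset.Nat.sum_antidiagonal_eq_sum_range_succ_mk] at h
    rw [← h]
    refine Finset.sum_congr rfl fun i hi => ?_
    rw [Finset.mem_range] at hi
    rw [Polynomial.coeff_one_add_X_pow, coeff_one_sub_X_pow]
    have hpar : Even (2 * j - i) ↔ Even i := by
      rw [Nat.even_sub (by omega)]
      simp [Nat.even_mul]
    have : ((-1 : ℤ)) ^ (2 * j - i) = (-1) ^ i := by
      rcases Nat.even_or_odd i with he | ho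
      · rw [he.neg_one_pow, (hpar.mpr he).neg_one_pow]
      · rw [ho.neg_one_pow, (Nat.not_even_iff_odd.mp
          (fun hc => (Nat.not_even_iff_odd.mpr ho) (hpar.mp hc))).neg_one_pow]
    rw [this]; ring
  have pair : ∀ (f : ℕ → ℤ) (j : ℕ),
      ∑ i ∈ Finset.range (2 * j), f i = ∑ k ∈ Finset.range j, (f (2 * k) + f (2 * k + 1)) := by
    intro f j
    induction j with
    | zero => simp
    | succ j ih =>
      rw [Finset.sum_range_succ, ← ih, Nat.mul_succ, Finset.sum_range_succ, Finset.sum_range_succ]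
      ring
  have hsplit : ∑ i ∈ Finset.range (2 * j + 1),
      (-1 : ℤ) ^ i * (n.choose i : ℤ) * (n.choose (2 * j - i) : ℤ)
      = ((n.choose (2 * j) : ℤ) +
        ∑ k ∈ Finset.range j,
          ((n.choose (2 * k) : ℤ) * (n.choose (2 * j - 2 * k)) -
            (n.choose (2 * k + 1) : ℤ) * (n.choose (2 * j - 2 * k - 1)))) := by
    rw [Finset.sum_range_succ, pair]
    have hc : ∀ k ∈ Finset.range j,
        ((-1 : ℤ) ^ (2 * k) * (n.choose (2 * k) : ℤ) * (n.choose (2 * j - 2 * k) : ℤ) +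
          (-1 : ℤ) ^ (2 * k + 1) * (n.choose (2 * k + 1) : ℤ) *
            (n.choose (2 * j - (2 * k + 1)) : ℤ))
        = ((n.choose (2 * k) : ℤ) * (n.choose (2 * j - 2 * k)) -
            (n.choose (2 * k + 1) : ℤ) * (n.choose (2 * j - 2 * k - 1))) := by
      intro k _
      have h2 : (-1 : ℤ) ^ (2 * k) = 1 := by rw [pow_mul]; simp
      have h3 : (-1 : ℤ) ^ (2 * k + 1) = -1 := by rw [pow_succ, h2]; simp
      have h4 : 2 * j - (2 * k + 1) = 2 * j - 2 * k - 1 := by omega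
      rw [h2, h3, h4]
      ring
    rw [Finset.sum_congr rfl hc]
    have h1 : (-1 : ℤ) ^ (2 * j) = 1 := by rw [pow_mul]; simp
    rw [h1, Nat.sub_self, Nat.choose_zero_right]
    push_cast
    ring
  rw [hsplit] at key
  rw [key, ← mul_assoc, ← pow_add, ← two_mul, pow_mul]
  simp
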